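/- Let κ be a singular cardinal of cofinality ω, let (κ_n)_{n<ω} be an increasing sequence of infinite cardinals cofinal in κ, and let ρ be a function assigning to each pair α ≤ β < κ⁺ an ordinal ρ(α,β) < κ, satisfying: (1) for all ordinals ν < κ and all β < κ⁺, |{α < β : ρ(α,β) ≤ ν}| < ν⁺, where ν⁺ is the least cardinal greater than |ν|; and (2) for all α < β < γ < κ⁺, ρ(α,β) ≤ max(ρ(α,γ), ρ(β,γ)) and ρ(α,γ) ≤ max(ρ(α,β), ρ(β,γ)). Define P_ν(β) = {α < β : ρ(α,β) ≤ ν} and f_β(n) = ot(P_{κ_n}(β)). Then f_β <* f_γ for all β < γ < κ⁺; that is, the sequence (f_β)_{β<κ⁺} is increasing under eventual domination. -/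
import Mathlib


open Cardinal Set

universe u v

noncomputable section

/-- Eventual domination: `f n < g n` for all but finitely many `n`. -/
def EvLT (f g : ℕ → Ordinal.{u}) : Prop := {n | ¬ f n < g n}.Finite

/-- `C` is a club (closed and unbounded) subset of the ordinal `α`: every member of `C`
is below `α`, `C` is unbounded in `α`, and `C` is closed under suprema of its nonempty
subsets whose supremum is below `α`. -/
def IsClubIn (C : Set Ordinal.{u}) (α : Ordinal.{u}) : Prop :=
  (∀ β ∈ C, β < α) ∧ (∀ β < α, ∃ γ ∈ C, β ≤ γ) ∧
    (∀ Y ⊆ C, Y.Nonempty → sSup Y < α → sSup Y ∈ C)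

/-- The set of limit points of a set `C` of ordinals: those `β > 0` with `sup (C ∩ β) = β`. -/
def limPts (C : Set Ordinal.{u}) : Set Ordinal.{u} :=
  {β | 0 < β ∧ sSup (C ∩ Set.Iio β) = β}

/-- The order type of a set of ordinals. -/
def otype (X : Set Ordinal.{u}) : Ordinal.{u + 1} :=
  Ordinal.type ((· < ·) : X → X → Prop)

/-- `P_ν(β) = {α < β : ρ(α, β) ≤ ν}`. -/
def Pset (ρ : Ordinal.{u} → Ordinal.{u} → Ordinal.{u}) (ν β : Ordinal.{u}) :
    Set Ordinal.{u} :=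
  {α | α < β ∧ ρ α β ≤ ν}

/-- `f_β(n) = ot(P_{κn n}(β))`, the order type of `P_{κn n}(β)`. -/
def rhoFn (ρ : Ordinal.{u} → Ordinal.{u} → Ordinal.{u}) (κn : ℕ → Cardinal.{u})
    (β : Ordinal.{u}) (n : ℕ) : Ordinal.{u + 1} :=
  otype (Pset ρ (κn n).ord β)

lemma otype_le_of_subset {s t : Set Ordinal.{u}} (h : s ⊆ t) : otype s ≤ otype t := by
  rw [otype, otype, Ordinal.type_le_iff']
  exact ⟨⟨⟨Set.inclusion h, Set.inclusion_injective h⟩, Iff.rfl⟩⟩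

lemma otype_lt_of_subset {s t : Set Ordinal.{u}} (h : s ⊆ t) {β : Ordinal.{u}} (hβ : β ∈ t)
    (hub : ∀ x ∈ s, x < β) : otype s < otype t := by
  have h1 : otype s < otype (insert β s) := by
    rw [otype, otype, Ordinal.type_lt_iff]
    refine ⟨⟨⟨⟨fun x => ⟨x.1, Or.inr x.2⟩, fun a b hab =>
        Subtype.ext (by simpa using congrArg Subtype.val hab)⟩, Iff.rfl⟩, ⟨β, Or.inl rfl⟩, ?_⟩⟩
    rintro ⟨x, hx⟩
    constructor
    · rintro ⟨⟨a, ha⟩, he⟩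
      have : a = x := congrArg Subtype.val he
      subst this
      exact hub a ha
    · intro hxβ
      rcases hx with rfl | hx
      · exact absurd hxβ (lt_irrefl _)
      · exact ⟨⟨x, hx⟩, rfl⟩
  exact h1.trans_le (otype_le_of_subset (Set.insert_subset hβ h))

/-- Properties (1) and (2) of a `ρ`-function imply that the sequence
`f β n = ot(P_{κn n}(β))` is increasing under eventual domination. -/
theorem rhoFn_evLT
    (κ : Cardinal.{u}) (hκ : ℵ₀ < κ) (hcof : κ.ord.cof = ℵ₀)
    (κn : ℕ → Cardinal.{u}) (hinf : ∀ n, ℵ₀ ≤ κn n) (hmono : StrictMono κn)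
    (hlt : ∀ n, κn n < κ) (hcofinal : ∀ c < κ, ∃ n, c ≤ κn n)
    (ρ : Ordinal.{u} → Ordinal.{u} → Ordinal.{u})
    (hρ : ∀ α β, α ≤ β → β < (Order.succ κ).ord → ρ α β < κ.ord)
    (h1 : ∀ ν < κ.ord, ∀ β < (Order.succ κ).ord,
      #(Pset ρ ν β) < Cardinal.lift.{u + 1, u} (Order.succ ν.card))
    (h2 : ∀ α β γ, α < β → β < γ → γ < (Order.succ κ).ord →
      ρ α β ≤ max (ρ α γ) (ρ β γ) ∧ ρ α γ ≤ max (ρ α β) (ρ β γ))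
    :
    ∀ β γ, β < γ → γ < (Order.succ κ).ord → EvLT (rhoFn ρ κn β) (rhoFn ρ κn γ) := by
  intro β γ hβγ hγ
  -- choose m with ρ β γ < (κn m).ord
  have hρlt : ρ β γ < κ.ord := hρ β γ hβγ.le hγ
  obtain ⟨m, hm⟩ := hcofinal (ρ β γ).card ((Cardinal.lt_ord.mp hρlt))
  have key : ∀ n, m < n → rhoFn ρ κn β n < rhoFn ρ κn γ n := by
    intro n hn
    have hν : ρ β γ ≤ (κn n).ord := by
      have : (ρ β γ).card < κn n := lt_of_le_of_lt hm (hmono hn)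
      exact (Cardinal.lt_ord.mpr this).le
    have hsub : Pset ρ (κn n).ord β ⊆ Pset ρ (κn n).ord γ := by
      rintro α ⟨hαβ, hαρ⟩
      refine ⟨hαβ.trans hβγ, ?_⟩
      exact le_trans (h2 α β γ hαβ hβγ hγ).2 (max_le hαρ hν)
    have hβmem : β ∈ Pset ρ (κn n).ord γ := ⟨hβγ, hν⟩
    exact otype_lt_of_subset hsub hβmem (fun x hx => hx.1)
  apply Set.Finite.subset (Set.finite_Iic m)
  intro n hn
  by_contra hmn
  exact hn (key n (lt_of_not_ge (fun h => hmn (Set.mem_Iic.mpr h))))
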